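/- Limit of the multivariate Rényi divergence along the path at λ → 1: with notation as above, lim_{λ→1} D_{α^λ}(p⁰,…,p^d) = ∑_{k=1}^d γₖ · D_KL(p⁰ ‖ pᵏ), where D_KL(p‖q) = ∑ₓ p(x) log(p(x)/q(x)). -/

import Mathlib

open Real Finset Filter

/-- Limit of the multivariate Rényi divergence along the path at `λ → 1`:
it converges to the γ-weighted sum of Kullback–Leibler divergences
`∑ₖ γₖ D_KL(p⁰ ‖ pᵏ)`. -/
theorem multivariate_renyi_limit_at_one
    {X : Type*} [Fintype X] [Nonempty X] (d : ℕ)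
    (p0 : X → ℝ) (p : Fin d → X → ℝ) (γ : Fin d → ℝ)
    (hp0_pos : ∀ x, 0 < p0 x) (hp0_sum : ∑ x, p0 x = 1)
    (hp_pos : ∀ k x, 0 < p k x) (hp_sum : ∀ k, ∑ x, p k x = 1)
    (hγ_nonneg : ∀ k, 0 ≤ γ k) (hγ_sum : ∑ k, γ k = 1) :
    Filter.Tendsto
      (fun l : ℝ => (1 / (l - 1)) *
        Real.log (∑ x, (p0 x) ^ l * ∏ k, (p k x) ^ ((1 - l) * γ k)))
      (nhdsWithin 1 {1}ᶜ)
      (nhds (∑ k, γ k * ∑ x, p0 x * Real.log (p0 x / p k x))) := by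
  set C : X → ℝ := fun x => ∑ k, γ k * Real.log (p k x) with hC
  set S : ℝ → ℝ := fun l => ∑ x, Real.exp (l * Real.log (p0 x) + (1 - l) * C x) with hS
  have hrw : ∀ l : ℝ, ∀ x : X,
      (p0 x) ^ l * ∏ k, (p k x) ^ ((1 - l) * γ k)
        = Real.exp (l * Real.log (p0 x) + (1 - l) * C x) := by
    intro l x
    have h1 : (p0 x) ^ l = Real.exp (l * Real.log (p0 x)) := by
      rw [Real.rpow_def_of_pos (hp0_pos x)]; ring_nf
    have h2 : ∀ k, (p k x) ^ ((1 - l) * γ k)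
        = Real.exp ((1 - l) * (γ k * Real.log (p k x))) := by
      intro k
      rw [Real.rpow_def_of_pos (hp_pos k x)]; ring_nf
    simp only [h1, h2, ← Real.exp_sum, ← Real.exp_add, ← Finset.mul_sum, hC]
  have hS1 : S 1 = 1 := by
    simp only [hS]
    simp [Real.exp_log (hp0_pos _), hp0_sum]
  set D : ℝ := ∑ x, p0 x * (Real.log (p0 x) - C x) with hD
  have hderivS : HasDerivAt S D 1 := by
    have h : ∀ x : X, HasDerivAt (fun l : ℝ => Real.exp (l * Real.log (p0 x) + (1 - l) * C x))
        (p0 x * (Real.log (p0 x) - C x)) 1 := by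
      intro x
      have hin : HasDerivAt (fun l : ℝ => l * Real.log (p0 x) + (1 - l) * C x)
          (Real.log (p0 x) - C x) 1 := by
        have h1 : HasDerivAt (fun l : ℝ => l * Real.log (p0 x)) (Real.log (p0 x)) 1 := by
          simpa using (hasDerivAt_id (1 : ℝ)).mul_const (Real.log (p0 x))
        have h2 : HasDerivAt (fun l : ℝ => (1 - l) * C x) (-C x) 1 := by
          simpa using ((hasDerivAt_const (1:ℝ) (1:ℝ)).sub (hasDerivAt_id (1 : ℝ))).mul_const (C x)
        simpa [sub_eq_add_neg] using h1.fun_add h2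
      have := hin.exp
      simpa [Real.exp_log (hp0_pos x)] using this
    simpa [hD] using HasDerivAt.fun_sum (fun x _ => h x)
  have hlog : HasDerivAt (fun l => Real.log (S l)) D 1 := by
    have := hderivS.log (by rw [hS1]; norm_num)
    simpa [hS1] using this
  have hslope := hasDerivAt_iff_tendsto_slope.mp hlog
  have hDeq : D = ∑ k, γ k * ∑ x, p0 x * Real.log (p0 x / p k x) := by
    have : ∀ k, ∀ x : X, Real.log (p0 x / p k x) = Real.log (p0 x) - Real.log (p k x) :=
      fun k x => Real.log_div (hp0_pos x).ne' (hp_pos k x).ne'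
    simp only [this, Finset.mul_sum, hD, hC]
    rw [Finset.sum_comm]
    refine Finset.sum_congr rfl fun x _ => ?_
    have : ∑ k, γ k * (p0 x * (Real.log (p0 x) - Real.log (p k x)))
        = (∑ k, γ k) * (p0 x * Real.log (p0 x)) - p0 x * ∑ k, γ k * Real.log (p k x) := by
      rw [Finset.sum_mul, Finset.mul_sum, ← Finset.sum_sub_distrib]
      exact Finset.sum_congr rfl fun k _ => by ring
    rw [this, hγ_sum]; ring
  rw [← hDeq]
  refine hslope.congr' ?_
  filter_upwards [self_mem_nhdsWithin] with l hl
  have hSl : (∑ x, (p0 x) ^ l * ∏ k, (p k x) ^ ((1 - l) * γ k)) = S l := by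
    simp only [hS, hrw]
  rw [slope_def_field, hS1, Real.log_one, sub_zero, hSl, one_div_mul_eq_div]
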